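/- Let Σ = {a,b} and let S = {α,β} be the two-element left-zero semigroup, with product xy = x for all x,y ∈ S (so both α and β are idempotent and right-absorbing). Let φ: Σ⁺ → S be the semigroup morphism with φ(a) = α and φ(b) = β. Then there is no φ-weakly-good automaton whose transition relation is deterministic (for every state q and letter a there is at most one q' with (q,a,q') ∈ Δ). -/

import Mathlib

/-- A (nondeterministic) Büchi/finite-word automaton with ordered states. -/
structure Auto (A : Type) where
  Q : Type
  fin : Fintype Q
  lin : LinearOrder Q
  trans : Q → A → Q → Prop
  init : Q
  final : Set Q
  rep : Set Q

namespace Auto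

variable {A : Type} (M : Auto A)

/-- The strict order on states. -/
def slt (p q : M.Q) : Prop := M.lin.lt p q

/-- `pathIn X p w q`: nonempty word `w` labels a run from `p` to `q`
with all intermediate states in `X`. -/
def pathIn (X : Set M.Q) : M.Q → List A → M.Q → Prop
  | _, [], _ => False
  | p, [a], q => M.trans p a q
  | p, a :: b :: w, q => ∃ r, r ∈ X ∧ M.trans p a r ∧ pathIn X r (b :: w) q

/-- `L_{p,X,q}`. -/
def Lset (X : Set M.Q) (p q : M.Q) : Set (List A) := {w | M.pathIn X p w q}

/-- `↓q`. -/
def below (q : M.Q) : Set M.Q := {p | M.slt p q}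

/-- `L_q = L_{q,↓q,q}`. -/
def Lq (q : M.Q) : Set (List A) := M.Lset (M.below q) q q

/-- Accepting run on a nonempty finite word: `ρ i` is the state after reading `i` letters. -/
def FinAccRun (w : List A) (ρ : Fin (w.length + 1) → M.Q) : Prop :=
  ρ 0 = M.init ∧
  (∀ i : Fin w.length, M.trans (ρ i.castSucc) (w.get i) (ρ i.succ)) ∧
  ρ (Fin.last w.length) ∈ M.final

/-- Accepting (Büchi) run on an infinite word. -/
def InfAccRun (w : ℕ → A) (ρ : ℕ → M.Q) : Prop :=
  ρ 0 = M.init ∧ (∀ i, M.trans (ρ i) (w i) (ρ (i + 1))) ∧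
  ∀ n, ∃ m, n ≤ m ∧ ρ m ∈ M.rep

/-- (G1): every finite or infinite word has exactly one accepting run. -/
def G1 : Prop :=
  (∀ w : List A, w ≠ [] → ∃! ρ : Fin (w.length + 1) → M.Q, M.FinAccRun w ρ) ∧
  (∀ w : ℕ → A, ∃! ρ : ℕ → M.Q, M.InfAccRun w ρ)

/-- (G2): each `L_q` is mapped by `φ` to a single idempotent of `S`. -/
def G2 {S : Type} [Semigroup S] (φ : List A → S) : Prop :=
  ∀ q : M.Q, ∃ e : S, e * e = e ∧ ∀ w ∈ M.Lq q, φ w = e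

/-- (G3): the initial state has no incoming transitions and is maximal. -/
def G3 : Prop :=
  (∀ p a, ¬ M.trans p a M.init) ∧ ∀ q : M.Q, q ≠ M.init → M.slt q M.init

/-- `φ`-weakly-good automaton. -/
def WeaklyGood {S : Type} [Semigroup S] (φ : List A → S) : Prop :=
  M.G1 ∧ M.G2 φ ∧ M.G3

/-- (G4) and `φ`-goodness. -/
def Good {S : Type} [Semigroup S] (φ : List A → S) : Prop :=
  M.WeaklyGood φ ∧
  ∃ f : M.Q, M.final = {f} ∧ (∀ a q, ¬ M.trans f a q) ∧
    M.slt f M.init ∧ ∀ q : M.Q, q ≠ M.init → q ≠ f → M.slt q f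

def Deterministic : Prop := ∀ p a q q', M.trans p a q → M.trans p a q' → q = q'

def Complete : Prop := ∀ p a, ∃ q, M.trans p a q

end Auto

/-- The two-element left-zero semigroup `S = {α, β}` with `x * y = x`. -/
inductive LZ : Type
  | α : LZ
  | β : LZ
deriving DecidableEq

instance : Fintype LZ := ⟨{LZ.α, LZ.β}, fun x => by cases x <;> simp⟩

instance : Mul LZ := ⟨fun x _ => x⟩

instance : Semigroup LZ where
  mul_assoc _ _ _ := rfl

/-- The alphabet `Σ = {a, b}` modeled as `Bool` (`a = true`, `b = false`);
`φ(a) = α`, `φ(b) = β`, so `φ(w)` is determined by the first letter of `w`. -/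
def phiLZ : List Bool → LZ
  | [] => LZ.α
  | x :: _ => if x then LZ.α else LZ.β

namespace Auto

variable {A : Type} {M : Auto A}

/-- A run (not necessarily accepting) from `p` to `q` labeled by `w`. -/
def runTo (M : Auto A) : M.Q → List A → M.Q → Prop
  | p, [], q => p = q
  | p, a :: w, q => ∃ r, M.trans p a r ∧ M.runTo r w q

lemma runTo_det (hdet : M.Deterministic) :
    ∀ (w : List A) (p q q' : M.Q), M.runTo p w q → M.runTo p w q' → q = q' := by
  intro w
  induction w with
  | nil => intro p q q' h h'; exact h.symm.trans h'
  | cons a w ih =>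
    rintro p q q' ⟨r, hr, h⟩ ⟨r', hr', h'⟩
    obtain rfl := hdet p a r r' hr hr'
    exact ih r q q' h h'

lemma runTo_append : ∀ (u v : List A) (p r : M.Q),
    M.runTo p (u ++ v) r ↔ ∃ s, M.runTo p u s ∧ M.runTo s v r := by
  intro u
  induction u with
  | nil => intro v p r; simp [runTo]
  | cons a u ih =>
    intro v p r
    constructor
    · rintro ⟨s, hs, h⟩
      obtain ⟨t, ht, h2⟩ := (ih v s r).mp h
      exact ⟨t, ⟨s, hs, ht⟩, h2⟩
    · rintro ⟨t, ⟨s, hs, ht⟩, h2⟩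
      exact ⟨s, hs, (ih v s r).mpr ⟨t, ht, h2⟩⟩

lemma runTo_snoc {p s t : M.Q} {u : List A} {x : A}
    (h1 : M.runTo p u s) (h2 : M.trans s x t) : M.runTo p (u ++ [x]) t :=
  (runTo_append u [x] p t).mpr ⟨s, h1, ⟨t, h2, rfl⟩⟩

lemma finAccRun_runTo {w : List A} {ρ : Fin (w.length + 1) → M.Q}
    (h : M.FinAccRun w ρ) : M.runTo M.init w (ρ (Fin.last w.length)) := by
  obtain ⟨h0, hstep, -⟩ := h
  have key : ∀ k (hk : k ≤ w.length),
      M.runTo M.init (w.take k) (ρ ⟨k, Nat.lt_succ_of_le hk⟩) := by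
    intro k
    induction k with
    | zero =>
      intro hk
      show M.init = ρ ⟨0, Nat.lt_succ_of_le hk⟩
      have h00 : (⟨0, Nat.lt_succ_of_le hk⟩ : Fin (w.length + 1)) = 0 := by
        ext; simp
      rw [h00, h0]
    | succ k ih =>
      intro hk
      have hk' : k < w.length := hk
      have ht := hstep ⟨k, hk'⟩
      have heq : w.take (k + 1) = w.take k ++ [w.get ⟨k, hk'⟩] := by
        rw [List.take_succ]
        simp [List.getElem?_eq_getElem hk']
      rw [heq]
      exact runTo_snoc (ih hk'.le) ht
  have hfin := key w.length le_rfl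
  rw [List.take_length] at hfin
  exact hfin

lemma pathIn_mono {X Y : Set M.Q} (hXY : X ⊆ Y) :
    ∀ (w : List A) (p q : M.Q), M.pathIn X p w q → M.pathIn Y p w q := by
  intro w
  induction w with
  | nil => intro p q h; exact h.elim
  | cons a w ih =>
    intro p q h
    cases w with
    | nil => exact h
    | cons b w' =>
      obtain ⟨r, hr, ht, hrest⟩ := h
      exact ⟨r, hXY hr, ht, ih r q hrest⟩

lemma pathIn_cons {X : Set M.Q} {p r q : M.Q} {x : A} {u : List A}
    (ht : M.trans p x r) (hr : r ∈ X) (hu : u ≠ []) (h : M.pathIn X r u q) :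
    M.pathIn X p (x :: u) q := by
  cases u with
  | nil => exact absurd rfl hu
  | cons b w => exact ⟨r, hr, ht, h⟩

lemma pathIn_snoc {X : Set M.Q} {t' t : M.Q} {x : A} :
    ∀ (v : List A) (p : M.Q), M.pathIn X p v t' → t' ∈ X → M.trans t' x t →
      M.pathIn X p (v ++ [x]) t := by
  intro v
  induction v with
  | nil => intro p h; exact h.elim
  | cons a w ih =>
    intro p h hX ht
    cases w with
    | nil => exact ⟨t', hX, h, ht⟩
    | cons b w' =>
      obtain ⟨r, hr, htr, hrest⟩ := h
      exact ⟨r, hr, htr, ih r hrest hX ht⟩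

lemma pathIn_trim {X : Set M.Q} {q : M.Q} :
    ∀ (w : List A) (p : M.Q), M.pathIn X p w q →
      ∃ u, u ≠ [] ∧ u.head? = w.head? ∧ M.pathIn {r | r ∈ X ∧ r ≠ q} p u q := by
  intro w
  induction w with
  | nil => intro p h; exact h.elim
  | cons a w ih =>
    intro p h
    cases w with
    | nil => exact ⟨[a], by simp, rfl, h⟩
    | cons b w' =>
      obtain ⟨r, hr, ht, hrest⟩ := h
      by_cases hrq : r = q
      · subst hrq
        exact ⟨[a], by simp, rfl, ht⟩
      · obtain ⟨u, hu, hh, hp⟩ := ih r hrest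
        exact ⟨a :: u, by simp, rfl, pathIn_cons ht ⟨hr, hrq⟩ hu hp⟩

end Auto

/-- There is no `φ`-weakly-good automaton with a deterministic transition
relation for the morphism onto the two-element left-zero semigroup. -/
theorem no_deterministic_weaklyGood_leftZero :
    ¬ ∃ M : Auto Bool, M.WeaklyGood phiLZ ∧ M.Deterministic := by
  rintro ⟨M, ⟨⟨g1fin, -⟩, g2, g3a, g3b⟩, det⟩
  classical
  letI := M.fin
  letI := M.lin
  set step : M.Q → M.Q → Prop := fun p r => ∃ x, M.trans p x r with hstepdef
  -- completeness at reachable states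
  have hcomp : ∀ p : M.Q, Relation.ReflTransGen step M.init p →
      ∀ x : Bool, ∃ q, M.trans p x q := by
    intro p hp x
    have hw : ∃ u, M.runTo M.init u p := by
      induction hp with
      | refl => exact ⟨[], rfl⟩
      | tail _ hbc ih =>
        obtain ⟨u, hu⟩ := ih
        obtain ⟨y, hy⟩ := hbc
        exact ⟨u ++ [y], Auto.runTo_snoc hu hy⟩
    obtain ⟨u, hu⟩ := hw
    obtain ⟨ρ, hρ, -⟩ := g1fin (u ++ [x]) (by simp)
    have h := Auto.finAccRun_runTo hρ
    rw [Auto.runTo_append] at h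
    obtain ⟨s, hs1, hs2⟩ := h
    obtain rfl : s = p := Auto.runTo_det det u M.init s p hs1 hu
    obtain ⟨r, hr, -⟩ := hs2
    exact ⟨r, hr⟩
  have hstep_ne : ∀ p r : M.Q, step p r → r ≠ M.init := by
    rintro p r ⟨x, hx⟩ rfl
    exact g3a p x hx
  have hreach_ne : ∀ p r : M.Q, p ≠ M.init → Relation.ReflTransGen step p r →
      r ≠ M.init := by
    intro p r hp h
    induction h with
    | refl => exact hp
    | tail _ hbc _ => exact hstep_ne _ _ hbc
  -- from any reachable non-initial state, a maximal "closed" state exists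
  have hmax : ∀ s : M.Q, s ≠ M.init → Relation.ReflTransGen step M.init s →
      ∃ q : M.Q, (q ≠ M.init ∧ Relation.ReflTransGen step M.init q ∧
        ∀ p, Relation.ReflTransGen step q p → p ≤ q) ∧
        Relation.ReflTransGen step s q := by
    intro s hs hrs
    set T : Finset M.Q := Finset.univ.filter (fun p => Relation.ReflTransGen step s p)
      with hT
    have hTmem : ∀ p : M.Q, p ∈ T ↔ Relation.ReflTransGen step s p := by
      intro p; simp [hT]
    have hTne : T.Nonempty := ⟨s, (hTmem s).mpr Relation.ReflTransGen.refl⟩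
    have hq_reach : Relation.ReflTransGen step s (T.max' hTne) :=
      (hTmem _).mp (T.max'_mem hTne)
    refine ⟨T.max' hTne, ⟨hreach_ne s _ hs hq_reach, hrs.trans hq_reach, ?_⟩, hq_reach⟩
    intro p hp
    exact T.le_max' p ((hTmem p).mpr (hq_reach.trans hp))
  haveI : WellFoundedLT M.Q := Finite.to_wellFoundedLT
  have wf : WellFounded ((· < ·) : M.Q → M.Q → Prop) := wellFounded_lt
  have main : ∀ q : M.Q, ¬ (q ≠ M.init ∧ Relation.ReflTransGen step M.init q ∧
      ∀ p, Relation.ReflTransGen step q p → p ≤ q) := by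
    intro q0
    refine wf.induction
      (C := fun q => ¬ (q ≠ M.init ∧ Relation.ReflTransGen step M.init q ∧
        ∀ p, Relation.ReflTransGen step q p → p ≤ q)) q0 ?_
    rintro q ih ⟨hqi, hqr, hqmax⟩
    obtain ⟨sa, hsa⟩ := hcomp q hqr true
    obtain ⟨sb, hsb⟩ := hcomp q hqr false
    -- if a successor returns to q, we get a word in L_q with prescribed head
    have hloop : ∀ (x : Bool) (s : M.Q), M.trans q x s →
        Relation.ReflTransGen step s q →
        ∃ u : List Bool, u ∈ M.Lq q ∧ u.head? = some x := by
      intro x s htr hret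
      have gen : ∀ t : M.Q, Relation.ReflTransGen step s t →
          s = t ∨ ∃ v, v ≠ [] ∧
            M.pathIn {p | Relation.ReflTransGen step q p} s v t := by
        intro t ht
        induction ht with
        | refl => exact Or.inl rfl
        | tail hprev hbc ihg =>
          obtain ⟨y, hy⟩ := hbc
          rcases ihg with rfl | ⟨v, hv, hp⟩
          · exact Or.inr ⟨[y], by simp, hy⟩
          · refine Or.inr ⟨v ++ [y], by simp, Auto.pathIn_snoc v s hp ?_ hy⟩
            exact (Relation.ReflTransGen.single ⟨x, htr⟩).trans hprev
      have hpath : ∃ w : List Bool, w.head? = some x ∧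
          M.pathIn {p | Relation.ReflTransGen step q p} q w q := by
        rcases gen q hret with heq | ⟨v, hv, hp⟩
        · subst heq
          exact ⟨[x], rfl, htr⟩
        · exact ⟨x :: v, rfl,
            Auto.pathIn_cons htr (Relation.ReflTransGen.single ⟨x, htr⟩) hv hp⟩
      obtain ⟨w, hwh, hwp⟩ := hpath
      obtain ⟨u, hune, huh, hup⟩ := Auto.pathIn_trim w q hwp
      refine ⟨u, ?_, huh.trans hwh⟩
      have hsub : {r | r ∈ {p | Relation.ReflTransGen step q p} ∧ r ≠ q} ⊆
          M.below q := by
        rintro r ⟨hr, hrq⟩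
        exact lt_of_le_of_ne (hqmax r hr) hrq
      exact Auto.pathIn_mono hsub u q q hup
    -- if a successor does not return, recurse on a strictly smaller state
    have recurse : ∀ (x : Bool) (s : M.Q), M.trans q x s →
        ¬ Relation.ReflTransGen step s q → False := by
      intro x s hts hnret
      obtain ⟨q', ⟨hq'i, hq'r, hq'max⟩, hsq'⟩ :=
        hmax s (hstep_ne q s ⟨x, hts⟩) (hqr.tail ⟨x, hts⟩)
      have hle : q' ≤ q := hqmax q' ((Relation.ReflTransGen.single ⟨x, hts⟩).trans hsq')
      have hne : q' ≠ q := by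
        rintro rfl
        exact hnret hsq'
      exact ih q' (lt_of_le_of_ne hle hne) ⟨hq'i, hq'r, hq'max⟩
    by_cases hra : Relation.ReflTransGen step sa q
    · by_cases hrb : Relation.ReflTransGen step sb q
      · obtain ⟨ua, hua, huah⟩ := hloop true sa hsa hra
        obtain ⟨ub, hub, hubh⟩ := hloop false sb hsb hrb
        obtain ⟨e, -, he⟩ := g2 q
        have h1 : phiLZ ua = LZ.α := by
          cases ua with
          | nil => simp at huah
          | cons c l =>
            simp only [List.head?_cons, Option.some_inj] at huah
            simp [phiLZ, huah]
        have h2 : phiLZ ub = LZ.β := by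
          cases ub with
          | nil => simp at hubh
          | cons c l =>
            simp only [List.head?_cons, Option.some_inj] at hubh
            simp [phiLZ, hubh]
        have hαβ : LZ.α = LZ.β := by
          rw [← h1, ← h2, he ua hua, he ub hub]
        exact absurd hαβ (by decide)
      · exact recurse false sb hsb hrb
    · exact recurse true sa hsa hra
  obtain ⟨q0, hq0⟩ := hcomp M.init Relation.ReflTransGen.refl true
  have hq0i : q0 ≠ M.init := fun h => g3a M.init true (h ▸ hq0)
  obtain ⟨q, hIq, -⟩ := hmax q0 hq0i (Relation.ReflTransGen.single ⟨true, hq0⟩)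
  exact main q hIq
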